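/- The polynomial (x^3-y^3)(y^3-z^3)(z^3-x^3) vanishes to order exactly 3 at each of the 12 triple points of the dual Hesse arrangement. -/
import Mathlib


open MvPolynomial

noncomputable section

/-- `f` vanishes to order at least `m` at the point `p`, i.e. all partial derivatives
of order `< m` of `f` vanish at `p` (we are in characteristic zero). -/
def VanishToOrder (f : MvPolynomial (Fin 3) ℂ) (p : Fin 3 → ℂ) (m : ℕ) : Prop :=
  ∀ ds : List (Fin 3), ds.length < m →
    eval p (ds.foldr (fun i g => pderiv i g) f) = 0

/-- The 9 linear forms of the dual Hesse arrangement: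
`x - εᵏy`, `y - εᵏz`, `z - εᵏx` for `k = 0,1,2`. -/
def DualHesseForm (ε : ℂ) : Fin 3 × Fin 3 → MvPolynomial (Fin 3) ℂ := fun jk =>
  ![X 0 - C (ε ^ (jk.2 : ℕ)) * X 1,
    X 1 - C (ε ^ (jk.2 : ℕ)) * X 2,
    X 2 - C (ε ^ (jk.2 : ℕ)) * X 0] jk.1

lemma pderiv_three' (i : Fin 3) : (pderiv i) (3 : MvPolynomial (Fin 3) ℂ) = 0 := by
  have : (3 : MvPolynomial (Fin 3) ℂ) = C 3 := by rw [map_ofNat]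
  rw [this, pderiv_C]

lemma form_eval' (ε : ℂ) (v : Fin 3 → ℂ) (j k : Fin 3) :
    eval v (DualHesseForm ε (j, k)) = v j - ε ^ (k:ℕ) * v (j + 1) := by
  fin_cases j <;> simp [DualHesseForm]

lemma vanish_triple' (A B C : MvPolynomial (Fin 3) ℂ) (v : Fin 3 → ℂ)
    (hA : eval v A = 0) (hB : eval v B = 0) (hC : eval v C = 0) :
    VanishToOrder (A*B*C) v 3 := by
  intro ds h
  match ds with
  | [] => simp [hA]
  | [i] => simp [pderiv_mul, hA, hB, hC]
  | [i,j] => simp [pderiv_mul, hA, hB, hC, mul_add, add_mul]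
  | a::b::c::t => simp at h; omega

lemma vanish_first' (P Q : MvPolynomial (Fin 3) ℂ) (v : Fin 3 → ℂ)
    (h0 : eval v P = 0) (h1 : ∀ i, eval v (pderiv i P) = 0)
    (h2 : ∀ i j, eval v (pderiv i (pderiv j P)) = 0) :
    VanishToOrder (P*Q) v 3 := by
  intro ds h
  match ds with
  | [] => simp [h0]
  | [i] => simp [pderiv_mul, h0, h1]
  | [i,j] => simp [pderiv_mul, h0, h1, h2, mul_add, add_mul]
  | a::b::c::t => simp at h; omega

lemma deriv001' (v : Fin 3 → ℂ) :
    eval v (([0,0,1] : List (Fin 3)).foldr (fun i g => pderiv i g)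
      (((X 0:MvPolynomial (Fin 3) ℂ) ^ 3 - (X 1) ^ 3) * ((X 1) ^ 3 - (X 2) ^ 3)
        * ((X 2) ^ 3 - (X 0) ^ 3)))
    = -90 * v 0 ^ 4 * v 1 ^ 2 + 36 * v 0 * v 1 ^ 5 := by
  simp [pderiv_mul, pderiv_pow, pderiv_X, Pi.single_apply, pderiv_three']
  ring

set_option maxHeartbeats 2000000 in
/-- `(x³-y³)(y³-z³)(z³-x³)` vanishes to order exactly 3 at each triple point of the
dual Hesse arrangement (a point lying on exactly 3 of the 9 lines). -/
theorem vanish_order_exactly_three (ε : ℂ) (hε : IsPrimitiveRoot ε 3)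
    (v : Fin 3 → ℂ) (hv : v ≠ 0)
    (htriple : {jk : Fin 3 × Fin 3 | eval v (DualHesseForm ε jk) = 0}.ncard = 3) :
    VanishToOrder
      (((X 0) ^ 3 - (X 1) ^ 3) * ((X 1) ^ 3 - (X 2) ^ 3) * ((X 2) ^ 3 - (X 0) ^ 3)) v 3 ∧
    ¬ VanishToOrder
      (((X 0) ^ 3 - (X 1) ^ 3) * ((X 1) ^ 3 - (X 2) ^ 3) * ((X 2) ^ 3 - (X 0) ^ 3)) v 4 := by
  have hε3 : ε ^ 3 = 1 := hε.pow_eq_one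
  have hεne : ε ≠ 0 := by
    intro h; rw [h] at hε3; norm_num at hε3
  obtain ⟨a, b, c, hab, hac, hbc, hS⟩ := Set.ncard_eq_three.mp htriple
  obtain ⟨a1, a2⟩ := a
  obtain ⟨b1, b2⟩ := b
  obtain ⟨c1, c2⟩ := c
  have mem1 : ((a1,a2) : Fin 3 × Fin 3) ∈ ({(a1,a2),(b1,b2),(c1,c2)} : Set (Fin 3 × Fin 3)) :=
    Set.mem_insert _ _
  have mem2 : ((b1,b2) : Fin 3 × Fin 3) ∈ ({(a1,a2),(b1,b2),(c1,c2)} : Set (Fin 3 × Fin 3)) :=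
    Set.mem_insert_iff.mpr (Or.inr (Set.mem_insert _ _))
  have mem3 : ((c1,c2) : Fin 3 × Fin 3) ∈ ({(a1,a2),(b1,b2),(c1,c2)} : Set (Fin 3 × Fin 3)) :=
    Set.mem_insert_iff.mpr (Or.inr (Set.mem_insert_iff.mpr (Or.inr rfl)))
  have hmem : ∀ j k : Fin 3, ((j,k) : Fin 3 × Fin 3) ∈ ({(a1,a2),(b1,b2),(c1,c2)} : Set (Fin 3 × Fin 3)) →
      v j = ε ^ (k:ℕ) * v (j + 1) := by
    intro j k hx
    have hx2 : ((j,k) : Fin 3 × Fin 3) ∈ {jk : Fin 3 × Fin 3 | eval v (DualHesseForm ε jk) = 0} := by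
      rw [hS]; exact hx
    have h' : eval v (DualHesseForm ε (j,k)) = 0 := hx2
    rw [form_eval'] at h'
    linear_combination h'
  by_cases h0 : v 0 = 0 <;> by_cases h1 : v 1 = 0 <;> by_cases h2 : v 2 = 0
  -- case TTT : v = 0
  · exact absurd (_root_.funext fun i => by fin_cases i <;> assumption) hv
  -- case TTF : v = (0,0,r)
  · constructor
    · rw [show (((X 0:MvPolynomial (Fin 3) ℂ) ^ 3 - (X 1) ^ 3) * ((X 1) ^ 3 - (X 2) ^ 3)
          * ((X 2) ^ 3 - (X 0) ^ 3))
        = ((X 0) ^ 3 - (X 1) ^ 3) * (((X 1) ^ 3 - (X 2) ^ 3) * ((X 2) ^ 3 - (X 0) ^ 3)) from by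
          ring]
      refine vanish_first' _ _ v (by simp [h0, h1]) ?_ ?_
      · intro i; fin_cases i <;>
          simp [pderiv_pow, pderiv_X, Pi.single_apply, h0, h1]
      · intro i j; fin_cases i <;> fin_cases j <;>
          simp [pderiv_pow, pderiv_X, pderiv_mul, pderiv_three', Pi.single_apply, h0, h1]
    · intro hV
      have h3 := hV [0,0,0] (by norm_num)
      simp [pderiv_mul, pderiv_pow, pderiv_X, Pi.single_apply, pderiv_three', h0, h1] at h3
      exact h2 h3
  -- case TFT : v = (0,q,0)
  · constructor
    · rw [show (((X 0:MvPolynomial (Fin 3) ℂ) ^ 3 - (X 1) ^ 3) * ((X 1) ^ 3 - (X 2) ^ 3)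
          * ((X 2) ^ 3 - (X 0) ^ 3))
        = ((X 2) ^ 3 - (X 0) ^ 3) * (((X 0) ^ 3 - (X 1) ^ 3) * ((X 1) ^ 3 - (X 2) ^ 3)) from by
          ring]
      refine vanish_first' _ _ v (by simp [h0, h2]) ?_ ?_
      · intro i; fin_cases i <;>
          simp [pderiv_pow, pderiv_X, Pi.single_apply, h0, h2]
      · intro i j; fin_cases i <;> fin_cases j <;>
          simp [pderiv_pow, pderiv_X, pderiv_mul, pderiv_three', Pi.single_apply, h0, h2]
    · intro hV
      have h3 := hV [2,2,2] (by norm_num)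
      simp [pderiv_mul, pderiv_pow, pderiv_X, Pi.single_apply, pderiv_three', h0, h2] at h3
      exact h1 h3
  -- case TFF : v = (0,q,r), contradiction
  · exfalso
    have fam : ∀ j k : Fin 3, ((j,k) : Fin 3 × Fin 3) ∈ ({(a1,a2),(b1,b2),(c1,c2)} : Set (Fin 3 × Fin 3)) →
        j = 1 := by
      intro j k hx
      have hxr := hmem j k hx
      fin_cases j
      · exfalso
        have h' : v 0 = ε ^ (k:ℕ) * v 1 := by simpa using hxr
        rw [h0] at h'
        rcases mul_eq_zero.mp h'.symm with h | h
        · exact hεne (pow_eq_zero_iff'.mp h).1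
        · exact h1 h
      · rfl
      · exfalso
        have h' : v 2 = ε ^ (k:ℕ) * v 0 := by simpa using hxr
        rw [h0, mul_zero] at h'
        exact h2 h'
    have ea1 : a1 = 1 := fam a1 a2 mem1
    have eb1 : b1 = 1 := fam b1 b2 mem2
    have ha : v a1 = ε ^ (a2:ℕ) * v (a1+1) := hmem a1 a2 mem1
    have hb : v b1 = ε ^ (b2:ℕ) * v (b1+1) := hmem b1 b2 mem2
    rw [ea1] at ha; rw [eb1] at hb
    have heq : ε ^ (a2:ℕ) * v (1+1) = ε ^ (b2:ℕ) * v (1+1) := ha.symm.trans hb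
    have h22 : v ((1:Fin 3)+1) ≠ 0 := by simpa using h2
    have := mul_right_cancel₀ h22 heq
    have := hε.pow_inj a2.isLt b2.isLt this
    exact hab (by rw [ea1, eb1, Fin.val_injective this])
  -- case FTT : v = (p,0,0)
  · constructor
    · rw [show (((X 0:MvPolynomial (Fin 3) ℂ) ^ 3 - (X 1) ^ 3) * ((X 1) ^ 3 - (X 2) ^ 3)
          * ((X 2) ^ 3 - (X 0) ^ 3))
        = ((X 1) ^ 3 - (X 2) ^ 3) * (((X 0) ^ 3 - (X 1) ^ 3) * ((X 2) ^ 3 - (X 0) ^ 3)) from by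
          ring]
      refine vanish_first' _ _ v (by simp [h1, h2]) ?_ ?_
      · intro i; fin_cases i <;>
          simp [pderiv_pow, pderiv_X, Pi.single_apply, h1, h2]
      · intro i j; fin_cases i <;> fin_cases j <;>
          simp [pderiv_pow, pderiv_X, pderiv_mul, pderiv_three', Pi.single_apply, h1, h2]
    · intro hV
      have h3 := hV [1,1,1] (by norm_num)
      simp [pderiv_mul, pderiv_pow, pderiv_X, Pi.single_apply, pderiv_three', h1, h2] at h3
      exact h0 h3
  -- case FTF : v = (p,0,r), contradiction
  · exfalso
    have fam : ∀ j k : Fin 3, ((j,k) : Fin 3 × Fin 3) ∈ ({(a1,a2),(b1,b2),(c1,c2)} : Set (Fin 3 × Fin 3)) →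
        j = 2 := by
      intro j k hx
      have hxr := hmem j k hx
      fin_cases j
      · exfalso
        have h' : v 0 = ε ^ (k:ℕ) * v 1 := by simpa using hxr
        rw [h1, mul_zero] at h'
        exact h0 h'
      · exfalso
        have h' : v 1 = ε ^ (k:ℕ) * v 2 := by simpa using hxr
        rw [h1] at h'
        rcases mul_eq_zero.mp h'.symm with h | h
        · exact hεne (pow_eq_zero_iff'.mp h).1
        · exact h2 h
      · rfl
    have ea1 : a1 = 2 := fam a1 a2 mem1
    have eb1 : b1 = 2 := fam b1 b2 mem2
    have ha : v a1 = ε ^ (a2:ℕ) * v (a1+1) := hmem a1 a2 mem1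
    have hb : v b1 = ε ^ (b2:ℕ) * v (b1+1) := hmem b1 b2 mem2
    rw [ea1] at ha; rw [eb1] at hb
    have heq : ε ^ (a2:ℕ) * v (2+1) = ε ^ (b2:ℕ) * v (2+1) := ha.symm.trans hb
    have h00 : v ((2:Fin 3)+1) ≠ 0 := by simpa using h0
    have := mul_right_cancel₀ h00 heq
    have := hε.pow_inj a2.isLt b2.isLt this
    exact hab (by rw [ea1, eb1, Fin.val_injective this])
  -- case FFT : v = (p,q,0), contradiction
  · exfalso
    have fam : ∀ j k : Fin 3, ((j,k) : Fin 3 × Fin 3) ∈ ({(a1,a2),(b1,b2),(c1,c2)} : Set (Fin 3 × Fin 3)) →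
        j = 0 := by
      intro j k hx
      have hxr := hmem j k hx
      fin_cases j
      · rfl
      · exfalso
        have h' : v 1 = ε ^ (k:ℕ) * v 2 := by simpa using hxr
        rw [h2, mul_zero] at h'
        exact h1 h'
      · exfalso
        have h' : v 2 = ε ^ (k:ℕ) * v 0 := by simpa using hxr
        rw [h2] at h'
        rcases mul_eq_zero.mp h'.symm with h | h
        · exact hεne (pow_eq_zero_iff'.mp h).1
        · exact h0 h
    have ea1 : a1 = 0 := fam a1 a2 mem1
    have eb1 : b1 = 0 := fam b1 b2 mem2
    have ha : v a1 = ε ^ (a2:ℕ) * v (a1+1) := hmem a1 a2 mem1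
    have hb : v b1 = ε ^ (b2:ℕ) * v (b1+1) := hmem b1 b2 mem2
    rw [ea1] at ha; rw [eb1] at hb
    have heq : ε ^ (a2:ℕ) * v (0+1) = ε ^ (b2:ℕ) * v (0+1) := ha.symm.trans hb
    have h11 : v ((0:Fin 3)+1) ≠ 0 := by simpa using h1
    have := mul_right_cancel₀ h11 heq
    have := hε.pow_inj a2.isLt b2.isLt this
    exact hab (by rw [ea1, eb1, Fin.val_injective this])
  -- case FFF : generic triple point
  · have hall : ∀ i : Fin 3, v i ≠ 0 := by
      intro i; fin_cases i <;> assumption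
    have uniq : ∀ j k j' k' : Fin 3,
        ((j,k) : Fin 3 × Fin 3) ∈ ({(a1,a2),(b1,b2),(c1,c2)} : Set (Fin 3 × Fin 3)) →
        ((j',k') : Fin 3 × Fin 3) ∈ ({(a1,a2),(b1,b2),(c1,c2)} : Set (Fin 3 × Fin 3)) →
        j = j' → ((j,k) : Fin 3 × Fin 3) = (j',k') := by
      intro j k j' k' hx hy hjj
      have hxr := hmem j k hx
      have hyr := hmem j' k' hy
      rw [hjj] at hxr
      have heq : ε ^ (k:ℕ) * v (j'+1) = ε ^ (k':ℕ) * v (j'+1) := hxr.symm.trans hyr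
      have := mul_right_cancel₀ (hall _) heq
      have := hε.pow_inj k.isLt k'.isLt this
      rw [hjj, Fin.val_injective this]
    have dab : a1 ≠ b1 := fun h => hab (uniq a1 a2 b1 b2 mem1 mem2 h)
    have dac : a1 ≠ c1 := fun h => hac (uniq a1 a2 c1 c2 mem1 mem3 h)
    have dbc : b1 ≠ c1 := fun h => hbc (uniq b1 b2 c1 c2 mem2 mem3 h)
    have cover : ∀ j : Fin 3, ∃ k : Fin 3,
        ((j,k) : Fin 3 × Fin 3) ∈ ({(a1,a2),(b1,b2),(c1,c2)} : Set (Fin 3 × Fin 3)) := by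
      intro j
      have hj : j = a1 ∨ j = b1 ∨ j = c1 := by
        have n1 : (a1:ℕ) ≠ (b1:ℕ) := fun h => dab (Fin.val_injective h)
        have n2 : (a1:ℕ) ≠ (c1:ℕ) := fun h => dac (Fin.val_injective h)
        have n3 : (b1:ℕ) ≠ (c1:ℕ) := fun h => dbc (Fin.val_injective h)
        have l1 := a1.isLt; have l2 := b1.isLt; have l3 := c1.isLt; have l4 := j.isLt
        have : (j:ℕ) = (a1:ℕ) ∨ (j:ℕ) = (b1:ℕ) ∨ (j:ℕ) = (c1:ℕ) := by omega
        rcases this with h | h | h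
        · exact Or.inl (Fin.val_injective h)
        · exact Or.inr (Or.inl (Fin.val_injective h))
        · exact Or.inr (Or.inr (Fin.val_injective h))
      rcases hj with h | h | h
      · exact ⟨a2, by rw [h]; exact mem1⟩
      · exact ⟨b2, by rw [h]; exact mem2⟩
      · exact ⟨c2, by rw [h]; exact mem3⟩
    obtain ⟨k0, hk0⟩ := cover 0
    obtain ⟨k1, hk1⟩ := cover 1
    have r0 : v 0 = ε ^ (k0:ℕ) * v 1 := by simpa using hmem 0 k0 hk0
    have r1 : v 1 = ε ^ (k1:ℕ) * v 2 := by simpa using hmem 1 k1 hk1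
    have cube : ∀ (x y : ℂ) (k : ℕ), x = ε ^ k * y → x ^ 3 = y ^ 3 := by
      intro x y k h
      rw [h, mul_pow, ← pow_mul, mul_comm k 3, pow_mul, hε3, one_pow, one_mul]
    have hA : v 0 ^ 3 = v 1 ^ 3 := cube _ _ _ r0
    have hB : v 1 ^ 3 = v 2 ^ 3 := cube _ _ _ r1
    constructor
    · refine vanish_triple' _ _ _ v ?_ ?_ ?_
      · rw [map_sub, map_pow, map_pow, eval_X, eval_X, hA, sub_self]
      · rw [map_sub, map_pow, map_pow, eval_X, eval_X, hB, sub_self]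
      · rw [map_sub, map_pow, map_pow, eval_X, eval_X, hA.trans hB, sub_self]
    · intro hV
      have h3 := hV [0,0,1] (by norm_num)
      have key := (deriv001' v).symm.trans h3
      have hzero : v 0 ^ 4 * v 1 ^ 2 = 0 := by
        linear_combination (-(1:ℂ)/54) * key + (-(2:ℂ)/3 * v 0 * v 1 ^ 2) * hA
      exact absurd hzero (mul_ne_zero (pow_ne_zero _ h0) (pow_ne_zero _ h1))
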